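/- Let $p_1, \ldots, p_J$ be distinct primes congruent to $1$ modulo $4$, with associated angles $\theta_{p_j}$ as defined, and let $c_1, \ldots, c_J$ be integers, not all zero. Writing $\theta = \sum_{j=1}^J c_j \theta_{p_j}$, one has the repulsion estimate $|e^{i\theta} - 1| \ge (p_1^{|c_1|} \cdots p_J^{|c_J|})^{-1/2}$. -/

import Mathlib

open Complex

open Zsqrtd GaussianInt in
private lemma AR.norm_mk (x y : ℤ) : Zsqrtd.norm (⟨x, y⟩ : GaussianInt) = x ^ 2 + y ^ 2 := by
  simp [Zsqrtd.norm]; ring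

open Zsqrtd GaussianInt in
private lemma AR.prime_of_norm_prime {x : GaussianInt} {q : ℕ} (hq : Nat.Prime q)
    (h : Zsqrtd.norm x = (q : ℤ)) : Prime x := by
  have hnat : x.norm.natAbs = q := by rw [h]; exact Int.natAbs_natCast q
  rw [← UniqueFactorizationMonoid.irreducible_iff_prime]
  refine ⟨fun hu => ?_, fun u v huv => ?_⟩
  · rw [← Zsqrtd.norm_eq_one_iff] at hu
    rw [hnat] at hu
    exact hq.one_lt.ne' hu
  · have h2 : u.norm.natAbs * v.norm.natAbs = q := by
      rw [← Int.natAbs_mul, ← Zsqrtd.norm_mul, ← huv, hnat]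
    rcases hq.eq_one_or_self_of_dvd u.norm.natAbs ⟨v.norm.natAbs, h2.symm⟩ with h1 | h1
    · exact Or.inl (Zsqrtd.norm_eq_one_iff.mp h1)
    · right
      apply Zsqrtd.norm_eq_one_iff.mp
      rw [h1] at h2
      have : q * v.norm.natAbs = q * 1 := by rw [mul_one]; exact h2
      exact Nat.eq_of_mul_eq_mul_left hq.pos this

open Zsqrtd GaussianInt in
private lemma AR.not_dvd_conj {q : ℕ} (hq : Nat.Prime q) (hodd : q % 2 = 1) {x y : ℤ}
    (h : x ^ 2 + y ^ 2 = (q : ℤ)) : ¬ ((⟨x, y⟩ : GaussianInt) ∣ ⟨x, -y⟩) := by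
  intro hd
  have hnd : ∀ {u v : GaussianInt}, u ∣ v → u.norm ∣ v.norm := by
    rintro u v ⟨t, rfl⟩
    rw [Zsqrtd.norm_mul]
    exact dvd_mul_right _ _
  have hq' : Prime (q : ℤ) := Nat.prime_iff_prime_int.mp hq
  have hnormx : Zsqrtd.norm (⟨x, y⟩ : GaussianInt) = (q : ℤ) := by rw [AR.norm_mk]; exact h
  have h1 : (⟨x, y⟩ : GaussianInt) ∣ ⟨2 * x, 0⟩ := by
    have e : (⟨2 * x, 0⟩ : GaussianInt) = ⟨x, -y⟩ + ⟨x, y⟩ := by ext <;> simp <;> ring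
    rw [e]; exact dvd_add hd dvd_rfl
  have h2 : (⟨x, y⟩ : GaussianInt) ∣ ⟨0, 2 * y⟩ := by
    have e : (⟨0, 2 * y⟩ : GaussianInt) = ⟨x, y⟩ - ⟨x, -y⟩ := by ext <;> simp <;> ring
    rw [e]; exact dvd_sub dvd_rfl hd
  have hq2 : ¬ ((q : ℤ) ∣ 2) := by
    intro hh
    have h2 : (q : ℤ) ≤ 2 := Int.le_of_dvd (by norm_num) hh
    have h3 : 2 ≤ q := hq.two_le
    have h4 : q ≤ 2 := by exact_mod_cast h2
    omega
  have hdx : (q : ℤ) ∣ x := by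
    have := hnd h1
    rw [hnormx, AR.norm_mk] at this
    have : (q : ℤ) ∣ (2 * x) ^ 2 := by
      have e : (2 * x) ^ 2 + (0:ℤ) ^ 2 = (2 * x) ^ 2 := by ring
      rwa [e] at this
    rcases hq'.dvd_mul.mp (by rwa [sq] at this) with hh | hh <;>
      rcases hq'.dvd_mul.mp hh with hh2 | hh2 <;> first | exact hh2 | exact absurd hh2 hq2
  have hdy : (q : ℤ) ∣ y := by
    have := hnd h2
    rw [hnormx, AR.norm_mk] at this
    have : (q : ℤ) ∣ (2 * y) ^ 2 := by
      have e : (0:ℤ) ^ 2 + (2 * y) ^ 2 = (2 * y) ^ 2 := by ring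
      rwa [e] at this
    rcases hq'.dvd_mul.mp (by rwa [sq] at this) with hh | hh <;>
      rcases hq'.dvd_mul.mp hh with hh2 | hh2 <;> first | exact hh2 | exact absurd hh2 hq2
  obtain ⟨s, rfl⟩ := hdx
  obtain ⟨t, rfl⟩ := hdy
  have hq1 : (2:ℤ) ≤ (q:ℤ) := by exact_mod_cast hq.two_le
  have hs0 : (0:ℤ) ≤ s ^ 2 + t ^ 2 := by positivity
  rcases hs0.eq_or_lt with he | hl
  · have hs2 : s = 0 := by nlinarith [sq_nonneg s, sq_nonneg t]
    have ht2 : t = 0 := by nlinarith [sq_nonneg s, sq_nonneg t]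
    subst hs2; subst ht2
    simp at h
    omega
  · have h1' : (1:ℤ) ≤ s ^ 2 + t ^ 2 := hl
    nlinarith [mul_le_mul_of_nonneg_left h1' (by positivity : (0:ℤ) ≤ (q:ℤ) * (q:ℤ))]

/-- Repulsion of angles of Gaussian primes: for distinct primes `p_j ≡ 1 (mod 4)` with
associated angles `θ_{p_j}`, and integers `c_j` not all zero, writing
`θ = ∑ c_j θ_{p_j}` one has `|e^{iθ} - 1| ≥ (p₁^{|c₁|} ⋯ p_J^{|c_J|})^{-1/2}`. -/
theorem angle_repulsion (J : ℕ) (p : Fin J → ℕ)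
    (hp : ∀ j, Nat.Prime (p j)) (hmod : ∀ j, p j % 4 = 1)
    (hinj : Function.Injective p)
    (a b : Fin J → ℤ) (hab : ∀ j, (a j) ^ 2 + (b j) ^ 2 = (p j : ℤ))
    (θ : Fin J → ℝ)
    (hθ : ∀ j, θ j = Complex.arg ((a j : ℂ) + (b j : ℂ) * Complex.I))
    (hθpos : ∀ j, 0 < θ j) (hθlt : ∀ j, θ j < Real.pi / 4)
    (c : Fin J → ℤ) (hc : ∃ j, c j ≠ 0) :
    1 / Real.sqrt (∏ j, (p j : ℝ) ^ (c j).natAbs) ≤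
      ‖Complex.exp (Complex.I * (∑ j, (c j : ℂ) * (θ j : ℂ))) - 1‖ := by
  classical
  set n : Fin J → ℕ := fun j => (c j).natAbs with hn
  set f : Fin J → ℂ := fun j => (a j : ℂ) + (b j : ℂ) * Complex.I with hf
  have hnormSq : ∀ j, Complex.normSq (f j) = (p j : ℝ) := by
    intro j
    have : f j = ((a j : ℝ) : ℂ) + ((b j : ℝ) : ℂ) * Complex.I := by
      simp [hf]
    rw [this, Complex.normSq_add_mul_I]
    exact_mod_cast hab j
  have hppos : ∀ j, (0:ℝ) < (p j : ℝ) := fun j => by exact_mod_cast (hp j).pos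
  have hfabs : ∀ j, ‖f j‖ = Real.sqrt (p j) := by
    intro j
    rw [Complex.norm_def, hnormSq]
  have hsqrtpos : ∀ j, (0:ℝ) < Real.sqrt (p j) := fun j => Real.sqrt_pos.mpr (hppos j)
  have hfne : ∀ j, f j ≠ 0 := by
    intro j hz
    have := hfabs j
    rw [hz, norm_zero] at this
    exact (hsqrtpos j).ne this
  -- exp of a single angle
  have hexp1 : ∀ j, Complex.exp (Complex.I * (θ j : ℂ)) = f j / (Real.sqrt (p j) : ℂ) := by
    intro j
    have hane : ((‖f j‖ : ℝ) : ℂ) ≠ 0 := by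
      rw [hfabs j]
      exact_mod_cast (hsqrtpos j).ne'
    rw [hθ j, ← hfabs j, mul_comm Complex.I ((Complex.arg (f j) : ℝ) : ℂ), eq_div_iff hane,
      mul_comm (Complex.exp _) ((‖f j‖ : ℝ) : ℂ)]
    exact Complex.norm_mul_exp_arg_mul_I (f j)
  -- conjugate
  have hconj : ∀ j, (starRingEnd ℂ) (f j) = (a j : ℂ) - (b j : ℂ) * Complex.I := by
    intro j
    simp only [hf, map_add, map_mul, map_intCast, Complex.conj_I]
    ring
  -- per-index identity
  set g : Fin J → ℂ := fun j =>
    if 0 ≤ c j then (f j) ^ (n j) else ((starRingEnd ℂ) (f j)) ^ (n j) with hg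
  have hkey : ∀ j, Complex.exp (Complex.I * ((c j : ℂ) * (θ j : ℂ)))
      * ((Real.sqrt (p j) : ℂ)) ^ (n j) = g j := by
    intro j
    have hz : Complex.exp (Complex.I * ((c j : ℂ) * (θ j : ℂ)))
        = (Complex.exp (Complex.I * (θ j : ℂ))) ^ (c j) := by
      rw [← Complex.exp_int_mul]
      ring_nf
    rw [hz, hexp1 j]
    have hs : ((Real.sqrt (p j) : ℝ) : ℂ) ≠ 0 := by
      exact_mod_cast (hsqrtpos j).ne'
    by_cases hcj : 0 ≤ c j
    · have hcn : c j = (n j : ℤ) := (Int.natAbs_of_nonneg hcj).symm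
      simp only [hg, hcj, if_true]
      rw [hcn, zpow_natCast, div_pow, div_mul_cancel₀]
      exact pow_ne_zero _ hs
    · have hcn : c j = -(n j : ℤ) := by
        rw [hn]
        simp only []
        omega
      have hinv : (f j / (Real.sqrt (p j) : ℂ))⁻¹
          = (starRingEnd ℂ) (f j) / (Real.sqrt (p j) : ℂ) := by
        rw [inv_div]
        rw [div_eq_div_iff (hfne j) hs]
        rw [mul_comm ((starRingEnd ℂ) (f j)) (f j), Complex.mul_conj, hnormSq j]
        rw [← Complex.ofReal_mul, Real.mul_self_sqrt (hppos j).le]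
      rw [hcn, zpow_neg, zpow_natCast, ← inv_pow, hinv]
      simp only [hg, hcj, if_false]
      rw [div_pow, div_mul_cancel₀]
      exact pow_ne_zero _ hs
  -- product identity
  set E : ℂ := Complex.exp (Complex.I * (∑ j, (c j : ℂ) * (θ j : ℂ))) with hE
  set S : ℝ := ∏ j, (Real.sqrt (p j)) ^ (n j) with hS
  have hprod : E * (S : ℂ) = ∏ j, g j := by
    rw [hE, Finset.mul_sum, Complex.exp_sum, hS]
    push_cast
    rw [← Finset.prod_mul_distrib]
    exact Finset.prod_congr rfl fun j _ => hkey j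
  -- Gaussian integer
  set G : Fin J → GaussianInt := fun j =>
    if 0 ≤ c j then (⟨a j, b j⟩ : GaussianInt) ^ (n j)
    else (⟨a j, -(b j)⟩ : GaussianInt) ^ (n j) with hG
  set Z : GaussianInt := ∏ j, G j with hZ
  have hZC : (Z : ℂ) = ∏ j, g j := by
    rw [hZ, map_prod]
    refine Finset.prod_congr rfl fun j _ => ?_
    by_cases hcj : 0 ≤ c j <;> simp only [hG, hg, hcj, if_true, if_false, map_pow]
    · simp only [hf, GaussianInt.toComplex_def']
    · congr 1
      rw [GaussianInt.toComplex_def', hconj j]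
      push_cast
      ring
  -- S = sqrt R
  set R : ℝ := ∏ j, (p j : ℝ) ^ (n j) with hR
  have hSpos : 0 < S := Finset.prod_pos fun j _ => pow_pos (hsqrtpos j) _
  have hSR : Real.sqrt R = S := by
    have : R = S ^ 2 := by
      rw [hR, hS, ← Finset.prod_pow]
      refine Finset.prod_congr rfl fun j _ => ?_
      rw [← pow_mul, mul_comm (n j) 2, pow_mul, Real.sq_sqrt (hppos j).le]
    rw [this, Real.sqrt_sq hSpos.le]
  -- Z.im ≠ 0
  have hZim : Z.im ≠ 0 := by
    intro h0
    have hZstar : star Z = Z := by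
      have h1 : (star Z).re = Z.re := Zsqrtd.re_star Z
      have h2 : (star Z).im = Z.im := by rw [Zsqrtd.im_star, h0, neg_zero]
      exact Zsqrtd.ext h1 h2
    obtain ⟨j₀, hj₀⟩ := hc
    set σ : GaussianInt := if 0 ≤ c j₀ then (⟨a j₀, b j₀⟩ : GaussianInt)
      else (⟨a j₀, -(b j₀)⟩ : GaussianInt) with hσ
    have hσnorm : Zsqrtd.norm σ = (p j₀ : ℤ) := by
      by_cases hcj : 0 ≤ c j₀ <;> simp only [hσ, hcj, if_true, if_false] <;>
        rw [AR.norm_mk]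
      · exact hab j₀
      · rw [neg_sq]; exact hab j₀
    have hσprime : Prime σ := AR.prime_of_norm_prime (hp j₀) hσnorm
    have hσZ : σ ∣ Z := by
      refine dvd_trans ?_ (Finset.dvd_prod_of_mem G (Finset.mem_univ j₀))
      have hn0 : n j₀ ≠ 0 := Int.natAbs_ne_zero.mpr hj₀
      by_cases hcj : 0 ≤ c j₀ <;> simp only [hG, hσ, hcj, if_true, if_false] <;>
        exact dvd_pow_self _ hn0
    have hdvdprod : σ ∣ ∏ j, star (G j) := by
      rw [← star_prod, hZstar]
      exact hσZ
    obtain ⟨j₁, -, hd⟩ := hσprime.exists_mem_finset_dvd hdvdprod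
    have hbase : σ ∣ (if 0 ≤ c j₁ then (⟨a j₁, -(b j₁)⟩ : GaussianInt)
        else (⟨a j₁, b j₁⟩ : GaussianInt)) := by
      apply hσprime.dvd_of_dvd_pow (n := n j₁)
      rcases le_or_gt 0 (c j₁) with hcj | hcj
      · simp only [hG, hcj, if_true] at hd ⊢
        rwa [star_pow, Zsqrtd.star_mk] at hd
      · simp only [hG, not_le.mpr hcj, if_false] at hd ⊢
        rwa [star_pow, Zsqrtd.star_mk, neg_neg] at hd
    have hnd : ∀ {u v : GaussianInt}, u ∣ v → Zsqrtd.norm u ∣ Zsqrtd.norm v := by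
      rintro u v ⟨t, rfl⟩
      rw [Zsqrtd.norm_mul]
      exact dvd_mul_right _ _
    have hj01 : j₁ = j₀ := by
      have hnormdvd := hnd hbase
      rw [hσnorm] at hnormdvd
      have hnb : Zsqrtd.norm (if 0 ≤ c j₁ then (⟨a j₁, -(b j₁)⟩ : GaussianInt)
          else (⟨a j₁, b j₁⟩ : GaussianInt)) = (p j₁ : ℤ) := by
        rcases le_or_gt 0 (c j₁) with hcj | hcj
        · simp only [hcj, if_true]
          rw [AR.norm_mk, neg_sq]; exact hab j₁
        · simp only [not_le.mpr hcj, if_false]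
          rw [AR.norm_mk]; exact hab j₁
      rw [hnb] at hnormdvd
      have : p j₀ ∣ p j₁ := Int.natCast_dvd_natCast.mp hnormdvd
      exact (hinj ((Nat.prime_dvd_prime_iff_eq (hp j₀) (hp j₁)).mp this)).symm
    subst hj01
    have hodd : p j₁ % 2 = 1 := by have := hmod j₁; omega
    rcases le_or_gt 0 (c j₁) with hcj | hcj
    · simp only [hσ, hcj, if_true] at hbase
      exact AR.not_dvd_conj (hp j₁) hodd (hab j₁) hbase
    · simp only [hσ, not_le.mpr hcj, if_false] at hbase
      have hab' : (a j₁) ^ 2 + (-(b j₁)) ^ 2 = (p j₁ : ℤ) := by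
        rw [neg_sq]; exact hab j₁
      have := AR.not_dvd_conj (hp j₁) hodd hab'
      rw [neg_neg] at this
      exact this hbase
  -- final bound
  have hZC2 : (Z : ℂ) = E * (S : ℂ) := by rw [hZC, hprod]
  have hEim : ((Z.im : ℤ) : ℝ) = E.im * S := by
    have h1 : (Z : ℂ).im = E.im * S := by
      rw [hZC2, Complex.mul_im, Complex.ofReal_im, Complex.ofReal_re, mul_zero, zero_add]
    rw [← h1, GaussianInt.intCast_im]
  have habs1 : (1:ℝ) ≤ |((Z.im : ℤ) : ℝ)| := by
    rw [← Int.cast_abs]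
    exact_mod_cast Int.one_le_abs (by exact_mod_cast hZim)
  have him : 1 / S ≤ |E.im| := by
    rw [div_le_iff₀ hSpos]
    calc (1:ℝ) ≤ |((Z.im : ℤ) : ℝ)| := habs1
    _ = |E.im * S| := by rw [hEim]
    _ = |E.im| * S := by rw [abs_mul, abs_of_pos hSpos]
  have hfin : |E.im| ≤ ‖E - 1‖ := by
    have : (E - 1).im = E.im := by simp
    rw [← this]
    exact Complex.abs_im_le_norm _
  calc 1 / Real.sqrt (∏ j, (p j : ℝ) ^ (c j).natAbs) = 1 / S := by rw [← hSR]
  _ ≤ |E.im| := him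
  _ ≤ ‖E - 1‖ := hfin
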